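/- Let ψ : [0,∞) → (0,∞) be measurable, and suppose there exist constants B > 0 and A ≥ 1 such that for all x, y ∈ [0,∞) with |x−y| ≤ B one has ψ(y) ≤ A·ψ(x) (ψ is slowly varying). Then for every positive integer N and every ε > 0, the series ∑_{n=0}^∞ ψ(Nn)^ε converges if and only if the integral ∫_0^∞ ψ(t)^ε dt converges. -/

import Mathlib

open MeasureTheory
open scoped ENNReal NNReal

lemma slowly_varying_chain (ψ : ℝ → ℝ) (A B : ℝ) (hA : 1 ≤ A) (hB : 0 < B)
    (hsv : ∀ x y : ℝ, 0 ≤ x → 0 ≤ y → |x - y| ≤ B → ψ y ≤ A * ψ x) :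
    ∀ k : ℕ, ∀ x y : ℝ, 0 ≤ x → 0 ≤ y → |x - y| ≤ k * B → ψ y ≤ A ^ k * ψ x := by
  intro k
  induction k with
  | zero =>
    intro x y hx hy hxy
    have : x = y := by
      have : |x - y| = 0 := le_antisymm (by simpa using hxy) (abs_nonneg _)
      have := abs_eq_zero.mp this; linarith
    simp [this]
  | succ k ih =>
    intro x y hx hy hxy
    have hk1 : (0:ℝ) < (k:ℝ) + 1 := by positivity
    set r : ℝ := (k:ℝ) / ((k:ℝ) + 1) with hr
    have hr0 : 0 ≤ r := by positivity
    have hr1 : r ≤ 1 := by rw [hr, div_le_one hk1]; linarith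
    set z : ℝ := x + r * (y - x) with hzdef
    have hz0 : 0 ≤ z := by
      have h1 : z = (1 - r) * x + r * y := by ring
      rw [h1]
      have := mul_nonneg (sub_nonneg.mpr hr1) hx
      have := mul_nonneg hr0 hy
      linarith
    have hxz : |x - z| ≤ (k:ℝ) * B := by
      have h1 : x - z = r * (x - y) := by rw [hzdef]; ring
      rw [h1, abs_mul, abs_of_nonneg hr0]
      have h2 : r * |x - y| ≤ r * (((k:ℝ) + 1) * B) :=
        mul_le_mul_of_nonneg_left (by push_cast at hxy ⊢; linarith) hr0
      have h3 : r * (((k:ℝ) + 1) * B) = (k:ℝ) * B := by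
        rw [hr]; field_simp
      linarith
    have hzy : |z - y| ≤ B := by
      have h1 : z - y = (1 - r) * (x - y) := by rw [hzdef]; ring
      rw [h1, abs_mul, abs_of_nonneg (sub_nonneg.mpr hr1)]
      have h3 : (1 - r) * (((k:ℝ) + 1) * B) = B := by
        rw [hr]; field_simp; ring
      have h2 : (1 - r) * |x - y| ≤ (1 - r) * (((k:ℝ) + 1) * B) :=
        mul_le_mul_of_nonneg_left (by push_cast at hxy ⊢; linarith) (sub_nonneg.mpr hr1)
      linarith
    have h1 : ψ y ≤ A * ψ z := hsv z y hz0 hy hzy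
    have h2 : ψ z ≤ A ^ k * ψ x := ih x z hx hz0 hxz
    calc ψ y ≤ A * ψ z := h1
      _ ≤ A * (A ^ k * ψ x) := mul_le_mul_of_nonneg_left h2 (by linarith)
      _ = A ^ (k + 1) * ψ x := by ring


/-- For a slowly varying map `ψ : [0,∞) → (0,∞)` (measurable, with `ψ y ≤ A·ψ x` whenever
`|x−y| ≤ B`, for some `A ≥ 1`, `B > 0`), for every positive integer `N` and every `ε > 0`,
the series `∑ ψ(Nn)^ε` converges iff the integral `∫_0^∞ ψ(t)^ε dt` converges. -/
theorem summable_iff_integrable_of_slowly_varying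
    (ψ : ℝ → ℝ) (hmeas : Measurable ψ) (hpos : ∀ t : ℝ, 0 ≤ t → 0 < ψ t)
    (A B : ℝ) (hA : 1 ≤ A) (hB : 0 < B)
    (hsv : ∀ x y : ℝ, 0 ≤ x → 0 ≤ y → |x - y| ≤ B → ψ y ≤ A * ψ x)
    (N : ℕ) (hN : 0 < N) (ε : ℝ) (hε : 0 < ε) :
    Summable (fun n : ℕ => ψ ((N : ℝ) * n) ^ ε) ↔
      IntegrableOn (fun t : ℝ => ψ t ^ ε) (Set.Ici (0 : ℝ)) := by
  have hA0 : (0:ℝ) < A := lt_of_lt_of_le one_pos hA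
  -- the comparison constant over an interval of length N
  set kc : ℕ := ⌈(N:ℝ) / B⌉₊ with hkc
  set C : ℝ := A ^ kc with hCdef
  have hC1 : 1 ≤ C := one_le_pow₀ hA
  have hC0 : 0 < C := lt_of_lt_of_le one_pos hC1
  have hkB : (N:ℝ) ≤ kc * B := by
    have := Nat.le_ceil ((N:ℝ) / B)
    calc (N:ℝ) = (N:ℝ) / B * B := by field_simp
      _ ≤ (kc:ℝ) * B := mul_le_mul_of_nonneg_right this hB.le
  have key : ∀ x y : ℝ, 0 ≤ x → 0 ≤ y → |x - y| ≤ (N:ℝ) → ψ y ≤ C * ψ x := by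
    intro x y hx hy hxy
    exact slowly_varying_chain ψ A B hA hB hsv kc x y hx hy (le_trans hxy hkB)
  -- rpow comparison
  have keyε : ∀ x y : ℝ, 0 ≤ x → 0 ≤ y → |x - y| ≤ (N:ℝ) →
      ψ y ^ ε ≤ C ^ ε * ψ x ^ ε := by
    intro x y hx hy hxy
    have h1 : ψ y ^ ε ≤ (C * ψ x) ^ ε :=
      Real.rpow_le_rpow (hpos y hy).le (key x y hx hy hxy) hε.le
    rwa [Real.mul_rpow hC0.le (hpos x hx).le] at h1
  -- notation
  set f : ℝ → ℝ := fun t => ψ t ^ ε with hfdef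
  have hfmeas : Measurable f := (Real.continuous_rpow_const hε.le).measurable.comp hmeas
  set F : ℝ → ℝ≥0∞ := fun t => ENNReal.ofReal (f t) with hFdef
  have hFmeas : Measurable F := hfmeas.ennreal_ofReal
  set a : ℕ → ℝ≥0∞ := fun n => ENNReal.ofReal (ψ ((N:ℝ) * n) ^ ε) with hadef
  set S : ℕ → Set ℝ := fun n => Set.Ico ((N:ℝ) * n) ((N:ℝ) * (n + 1)) with hSdef
  have hNpos : (0:ℝ) < N := by exact_mod_cast hN
  have hSmeas : ∀ n, MeasurableSet (S n) := fun n => measurableSet_Ico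
  have hSvol : ∀ n, volume (S n) = ENNReal.ofReal N := by
    intro n
    rw [hSdef]
    simp only [Real.volume_Ico]
    congr 1
    ring
  have hUnion : (⋃ n, S n) = Set.Ici (0:ℝ) := by
    ext t
    simp only [Set.mem_iUnion, Set.mem_Ico, Set.mem_Ici]
    constructor
    · rintro ⟨n, h1, h2⟩
      have : (0:ℝ) ≤ (N:ℝ) * n := by positivity
      linarith
    · intro ht
      refine ⟨⌊t / N⌋₊, ?_, ?_⟩
      · have h1 : (⌊t / N⌋₊ : ℝ) ≤ t / N := Nat.floor_le (by positivity)
        calc (N:ℝ) * ⌊t / N⌋₊ ≤ N * (t / N) := mul_le_mul_of_nonneg_left h1 hNpos.le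
          _ = t := by field_simp
      · have h2 : t / N < ⌊t / N⌋₊ + 1 := Nat.lt_floor_add_one _
        calc t = N * (t / N) := by field_simp
          _ < N * (⌊t / N⌋₊ + 1) := by
            exact mul_lt_mul_of_pos_left h2 hNpos
  have hdisj : Pairwise (Function.onFun Disjoint S) := by
    intro m n hmn
    rcases lt_or_gt_of_ne hmn with h | h
    · apply Set.Ico_disjoint_Ico.mpr
      have : (N:ℝ) * (m + 1) ≤ N * n := by
        apply mul_le_mul_of_nonneg_left _ hNpos.le
        exact_mod_cast Nat.succ_le_of_lt h
      simp only [min_le_iff, le_max_iff]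
      first | exact Or.inl (Or.inl this) | exact Or.inl (Or.inr this) | exact Or.inr (Or.inl this) | exact Or.inr (Or.inr this)
    · apply Set.Ico_disjoint_Ico.mpr
      have : (N:ℝ) * (n + 1) ≤ N * m := by
        apply mul_le_mul_of_nonneg_left _ hNpos.le
        exact_mod_cast Nat.succ_le_of_lt h
      simp only [min_le_iff, le_max_iff]
      first | exact Or.inl (Or.inl this) | exact Or.inl (Or.inr this) | exact Or.inr (Or.inl this) | exact Or.inr (Or.inr this)
  -- decomposition of the lintegral
  have hdecomp : ∫⁻ t in Set.Ici (0:ℝ), F t = ∑' n, ∫⁻ t in S n, F t := by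
    rw [← hUnion, lintegral_iUnion hSmeas hdisj]
  -- membership facts
  have hmemS : ∀ n : ℕ, ∀ t ∈ S n, 0 ≤ t ∧ |(N:ℝ) * n - t| ≤ (N:ℝ) := by
    intro n t ht
    rw [hSdef] at ht
    obtain ⟨h1, h2⟩ := ht
    have h0 : (0:ℝ) ≤ (N:ℝ) * n := by positivity
    constructor
    · linarith
    · rw [abs_le]
      constructor <;> nlinarith
  -- upper bound on each piece
  have hupper : ∀ n : ℕ, ∫⁻ t in S n, F t ≤
      ENNReal.ofReal N * (ENNReal.ofReal (C ^ ε) * a n) := by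
    intro n
    have h1 : ∫⁻ t in S n, F t ≤ ∫⁻ _ in S n, ENNReal.ofReal (C ^ ε * ψ ((N:ℝ) * n) ^ ε) := by
      apply setLIntegral_mono' (hSmeas n)
      intro t ht
      obtain ⟨ht0, htd⟩ := hmemS n t ht
      exact ENNReal.ofReal_le_ofReal
        (keyε ((N:ℝ) * n) t (by positivity) ht0 htd)
    rw [setLIntegral_const, hSvol n] at h1
    calc ∫⁻ t in S n, F t ≤ ENNReal.ofReal (C ^ ε * ψ ((N:ℝ) * n) ^ ε) * ENNReal.ofReal N := h1
      _ = ENNReal.ofReal N * (ENNReal.ofReal (C ^ ε) * a n) := by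
          rw [ENNReal.ofReal_mul (by positivity)]
          ring
  -- lower bound on each piece
  have hlower : ∀ n : ℕ, ENNReal.ofReal N * a n ≤
      ENNReal.ofReal (C ^ ε) * ∫⁻ t in S n, F t := by
    intro n
    have h1 : ∫⁻ _ in S n, a n ≤ ∫⁻ t in S n, ENNReal.ofReal (C ^ ε) * F t := by
      apply setLIntegral_mono' (hSmeas n)
      intro t ht
      obtain ⟨ht0, htd⟩ := hmemS n t ht
      have htd' : |t - (N:ℝ) * n| ≤ (N:ℝ) := by rwa [abs_sub_comm]
      have h2 : ψ ((N:ℝ) * n) ^ ε ≤ C ^ ε * ψ t ^ ε := keyε t ((N:ℝ) * n) ht0 (by positivity) htd'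
      calc a n ≤ ENNReal.ofReal (C ^ ε * ψ t ^ ε) := ENNReal.ofReal_le_ofReal h2
        _ = ENNReal.ofReal (C ^ ε) * F t := ENNReal.ofReal_mul (by positivity)
    rw [setLIntegral_const, hSvol n, lintegral_const_mul (ENNReal.ofReal (C ^ ε)) hFmeas] at h1
    calc ENNReal.ofReal N * a n = a n * ENNReal.ofReal N := mul_comm _ _
      _ ≤ ENNReal.ofReal (C ^ ε) * ∫⁻ t in S n, F t := h1
  -- summability ↔ tsum a ≠ ⊤
  have hsum_iff : Summable (fun n : ℕ => ψ ((N : ℝ) * n) ^ ε) ↔ ∑' n, a n ≠ ⊤ := by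
    have h1 : ∀ n : ℕ, ψ ((N:ℝ) * n) ^ ε = ((ψ ((N:ℝ) * n) ^ ε).toNNReal : ℝ) := by
      intro n
      rw [Real.coe_toNNReal]
      exact Real.rpow_nonneg (hpos _ (by positivity)).le ε
    constructor
    · intro hs
      have hs' : Summable (fun n : ℕ => (ψ ((N:ℝ) * n) ^ ε).toNNReal) := by
        rw [← NNReal.summable_coe]
        exact hs.congr fun n => (h1 n)
      rw [hadef]
      simp only [ENNReal.ofReal]
      exact ENNReal.tsum_coe_ne_top_iff_summable.mpr hs'
    · intro ht
      have hs' : Summable (fun n : ℕ => (ψ ((N:ℝ) * n) ^ ε).toNNReal) := by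
        apply ENNReal.tsum_coe_ne_top_iff_summable.mp
        simpa [hadef, ENNReal.ofReal] using ht
      have := NNReal.summable_coe.mpr hs'
      exact this.congr fun n => (h1 n).symm
  -- integrability ↔ lintegral over Ici 0 finite
  have hint_iff : IntegrableOn f (Set.Ici (0:ℝ)) ↔ ∫⁻ t in Set.Ici (0:ℝ), F t ≠ ⊤ := by
    have hcongr : ∫⁻ t in Set.Ici (0:ℝ), (‖f t‖₊ : ℝ≥0∞) = ∫⁻ t in Set.Ici (0:ℝ), F t := by
      apply setLIntegral_congr_fun measurableSet_Ici
      intro t ht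
      rw [hFdef]
      exact Real.enorm_eq_ofReal (Real.rpow_nonneg (hpos t ht).le ε)
    constructor
    · intro hint
      have := hint.2
      rw [HasFiniteIntegral] at this
      rw [← hcongr]
      exact this.ne
    · intro hfin
      refine ⟨(hfmeas.aestronglyMeasurable).restrict, ?_⟩
      rw [HasFiniteIntegral]
      erw [hcongr]
      exact lt_top_iff_ne_top.mpr hfin
  rw [hsum_iff, hint_iff, hdecomp]
  have hCfin : ENNReal.ofReal (C ^ ε) ≠ ⊤ := ENNReal.ofReal_ne_top
  have hNfin : ENNReal.ofReal (N:ℝ) ≠ ⊤ := ENNReal.ofReal_ne_top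
  have hN0 : ENNReal.ofReal (N:ℝ) ≠ 0 := by
    exact (ENNReal.ofReal_pos.mpr hNpos).ne'
  constructor
  · intro ha
    have h1 : ∑' n, ∫⁻ t in S n, F t ≤
        ENNReal.ofReal N * (ENNReal.ofReal (C ^ ε) * ∑' n, a n) := by
      calc ∑' n, ∫⁻ t in S n, F t
          ≤ ∑' n, ENNReal.ofReal N * (ENNReal.ofReal (C ^ ε) * a n) :=
            ENNReal.tsum_le_tsum hupper
        _ = ENNReal.ofReal N * (ENNReal.ofReal (C ^ ε) * ∑' n, a n) := by
            rw [ENNReal.tsum_mul_left, ENNReal.tsum_mul_left]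
    intro habs
    rw [habs] at h1
    have : ENNReal.ofReal (N:ℝ) * (ENNReal.ofReal (C ^ ε) * ∑' n, a n) ≠ ⊤ :=
      ENNReal.mul_ne_top hNfin (ENNReal.mul_ne_top hCfin ha)
    exact this (top_le_iff.mp h1)
  · intro hI
    have h1 : ENNReal.ofReal N * ∑' n, a n ≤
        ENNReal.ofReal (C ^ ε) * ∑' n, ∫⁻ t in S n, F t := by
      calc ENNReal.ofReal (N:ℝ) * ∑' n, a n = ∑' n, ENNReal.ofReal (N:ℝ) * a n :=
            (ENNReal.tsum_mul_left).symm
        _ ≤ ∑' n, ENNReal.ofReal (C ^ ε) * ∫⁻ t in S n, F t := ENNReal.tsum_le_tsum hlower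
        _ = ENNReal.ofReal (C ^ ε) * ∑' n, ∫⁻ t in S n, F t := ENNReal.tsum_mul_left
    have h2 : ENNReal.ofReal (C ^ ε) * ∑' n, ∫⁻ t in S n, F t ≠ ⊤ :=
      ENNReal.mul_ne_top hCfin hI
    intro habs
    rw [habs, ENNReal.mul_top hN0] at h1
    exact h2 (top_le_iff.mp h1)
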